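/- Let q = 2^m and B = {u_1, u_2, u_3, u_4} ⊆ U_{q+1} a 4-subset. If a ∈ U_{q+1} satisfies σ_{4,2}(B) + a·σ_{4,1}(B) = 0, then a ∉ B. -/

import Mathlib

open Finset

/-- The `l`-th elementary symmetric polynomial evaluated on a finite set `B`. -/
noncomputable def esym {F : Type*} [CommRing F] (B : Finset F) (l : ℕ) : F :=
  ∑ s ∈ B.powersetCard l, ∏ x ∈ s, x

/-- The set of `n`-th roots of unity. -/
def rootsSet (F : Type*) [Monoid F] (n : ℕ) : Set F := {u | u ^ n = 1}

lemma esym_zero' {F : Type*} [CommRing F] (B : Finset F) : esym B 0 = 1 := by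
  simp [esym]

lemma esym_empty' {F : Type*} [CommRing F] (n : ℕ) : esym (∅ : Finset F) (n + 1) = 0 := by
  unfold esym
  rw [Finset.powersetCard_eq_empty.mpr (by simp), Finset.sum_empty]

lemma esym_insert {F : Type*} [CommRing F] [DecidableEq F] (a : F) (s : Finset F)
    (h : a ∉ s) (n : ℕ) :
    esym (insert a s) (n + 1) = esym s (n + 1) + a * esym s n := by
  unfold esym
  rw [Finset.powersetCard_succ_insert h, Finset.sum_union, Finset.sum_image, Finset.mul_sum]
  · congr 1
    refine Finset.sum_congr rfl fun t ht => ?_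
    rw [Finset.prod_insert fun hat => h ((Finset.mem_powersetCard.mp ht).1 hat)]
  · intro t ht u hu htu
    have hat : a ∉ t := fun hat => h ((Finset.mem_powersetCard.mp ht).1 hat)
    have hau : a ∉ u := fun hau => h ((Finset.mem_powersetCard.mp hu).1 hau)
    have := congrArg (Finset.erase · a) htu
    simpa [Finset.erase_insert, hat, hau] using this
  · rw [Finset.disjoint_left]
    intro t ht htim
    obtain ⟨u, hu, rfl⟩ := Finset.mem_image.mp htim
    exact h ((Finset.mem_powersetCard.mp ht).1 (Finset.mem_insert_self a u))

theorem stmt3 (m : ℕ) (hm : 1 ≤ m)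
    (B : Finset (GaloisField 2 (2 * m)))
    (hBU : ↑B ⊆ rootsSet (GaloisField 2 (2 * m)) (2 ^ m + 1))
    (hB : B.card = 4)
    (a : GaloisField 2 (2 * m))
    (ha : a ∈ rootsSet (GaloisField 2 (2 * m)) (2 ^ m + 1))
    (heq : esym B 2 + a * esym B 1 = 0) :
    a ∉ B := by
  classical
  intro haB
  have h2 : (2 : (GaloisField 2 (2 * m))) = 0 := by
    have := CharP.cast_eq_zero (GaloisField 2 (2 * m)) 2
    exact_mod_cast this
  -- extract the other three elements
  have hcard3 : (B.erase a).card = 3 := by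
    rw [Finset.card_erase_of_mem haB, hB]
  obtain ⟨b, c, d, hbc, hbd, hcd, hs⟩ := Finset.card_eq_three.mp hcard3
  have haE : a ∉ B.erase a := Finset.notMem_erase a B
  have hBeq : B = insert a ({b, c, d} : Finset (GaloisField 2 (2 * m))) := by
    rw [← hs, Finset.insert_erase haB]
  have hab : a ≠ b := by rintro rfl; exact haE (hs ▸ by simp)
  have hac : a ≠ c := by rintro rfl; exact haE (hs ▸ by simp)
  have had : a ≠ d := by rintro rfl; exact haE (hs ▸ by simp)
  -- roots of unity facts
  have hbB : b ∈ B := hBeq ▸ by simp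
  have hcB : c ∈ B := hBeq ▸ by simp
  have hdB : d ∈ B := hBeq ▸ by simp
  have haU : a ^ (2 ^ m + 1) = 1 := ha
  have hbU : b ^ (2 ^ m + 1) = 1 := hBU hbB
  have hcU : c ^ (2 ^ m + 1) = 1 := hBU hcB
  have hdU : d ^ (2 ^ m + 1) = 1 := hBU hdB
  have hne : ∀ x : GaloisField 2 (2 * m), x ^ (2 ^ m + 1) = 1 → x ≠ 0 := by
    rintro x hx rfl
    simp at hx
  have ha0 : a ≠ 0 := hne a haU
  have hb0 : b ≠ 0 := hne b hbU
  have hc0 : c ≠ 0 := hne c hcU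
  have hd0 : d ≠ 0 := hne d hdU
  have hinv : ∀ x : GaloisField 2 (2 * m), x ^ (2 ^ m + 1) = 1 → x ^ (2 ^ m) = x⁻¹ := by
    intro x hx
    have : x ^ (2 ^ m) * x = 1 := by rw [← pow_succ]; exact hx
    exact eq_inv_of_mul_eq_one_left this
  -- compute esym values
  have hd1 : esym ({d} : Finset (GaloisField 2 (2 * m))) 1 = d := by
    rw [show ({d} : Finset (GaloisField 2 (2 * m))) = insert d ∅ from rfl, esym_insert d ∅ (by simp) 0,
      esym_empty', esym_zero']
    ring
  have hd2 : esym ({d} : Finset (GaloisField 2 (2 * m))) 2 = 0 := by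
    rw [show ({d} : Finset (GaloisField 2 (2 * m))) = insert d ∅ from rfl, esym_insert d ∅ (by simp) 1,
      esym_empty', esym_empty']
    ring
  have hcd1 : esym ({c, d} : Finset (GaloisField 2 (2 * m))) 1 = c + d := by
    rw [show ({c, d} : Finset (GaloisField 2 (2 * m))) = insert c {d} from rfl,
      esym_insert c {d} (by simp [hcd]) 0, hd1, esym_zero']
    ring
  have hcd2 : esym ({c, d} : Finset (GaloisField 2 (2 * m))) 2 = c * d := by
    rw [show ({c, d} : Finset (GaloisField 2 (2 * m))) = insert c {d} from rfl,
      esym_insert c {d} (by simp [hcd]) 1, hd1, hd2]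
    ring
  have hbcd1 : esym ({b, c, d} : Finset (GaloisField 2 (2 * m))) 1 = b + c + d := by
    rw [show ({b, c, d} : Finset (GaloisField 2 (2 * m))) = insert b {c, d} from rfl,
      esym_insert b {c, d} (by simp [hbc, hbd]) 0, hcd1, esym_zero']
    ring
  have hbcd2 : esym ({b, c, d} : Finset (GaloisField 2 (2 * m))) 2 = b * c + b * d + c * d := by
    rw [show ({b, c, d} : Finset (GaloisField 2 (2 * m))) = insert b {c, d} from rfl,
      esym_insert b {c, d} (by simp [hbc, hbd]) 1, hcd1, hcd2]
    ring
  have hanot : a ∉ ({b, c, d} : Finset (GaloisField 2 (2 * m))) := by simp [hab, hac, had]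
  have hB1 : esym B 1 = a + b + c + d := by
    rw [hBeq, esym_insert a _ hanot 0, hbcd1, esym_zero']
    ring
  have hB2 : esym B 2 = a * b + a * c + a * d + b * c + b * d + c * d := by
    rw [hBeq, esym_insert a _ hanot 1, hbcd1, hbcd2]
    ring
  rw [hB1, hB2] at heq
  -- key equation: a^2 = bc + bd + cd
  have h1 : a ^ 2 = b * c + b * d + c * d := by
    linear_combination heq - (a * b + a * c + a * d + b * c + b * d + c * d) * h2
  -- apply Frobenius x ↦ x^(2^m)
  have hq : (a ^ (2 ^ m)) ^ 2 = b ^ (2 ^ m) * c ^ (2 ^ m) + b ^ (2 ^ m) * d ^ (2 ^ m)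
      + c ^ (2 ^ m) * d ^ (2 ^ m) := by
    have := congrArg (· ^ (2 ^ m)) h1
    rw [add_pow_char_pow, add_pow_char_pow, mul_pow, mul_pow, mul_pow, ← pow_mul,
      mul_comm 2 (2 ^ m), pow_mul] at this
    exact this
  rw [hinv a haU, hinv b hbU, hinv c hcU, hinv d hdU] at hq
  have hkey : b * c * d = a ^ 2 * (b + c + d) := by
    field_simp at hq
    have hbcd : b * c * d ≠ 0 := mul_ne_zero (mul_ne_zero hb0 hc0) hd0
    apply mul_left_cancel₀ hbcd
    linear_combination (b * c * d) * hq
  have hfac : (b + c) * ((b + d) * (c + d)) = 0 := by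
    linear_combination hkey - (b + c + d) * h1 + (a ^ 2 * (b + c + d) - b * c * d) * h2
  rcases mul_eq_zero.mp hfac with h | h
  · exact hbc (by linear_combination h - c * h2)
  rcases mul_eq_zero.mp h with h | h
  · exact hbd (by linear_combination h - d * h2)
  · exact hcd (by linear_combination h - d * h2)
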